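/- The set of linear operators on grid functions realizable by ACUs equals the set realizable by (finitely supported) convolutions: an operator T is of the form T x(m,n) = Σ_k w_k · x̂(m+α_k, n+β_k) for some finite synapse set if and only if it is of the form T x(m,n) = Σ_{(i,j)} w̄(i,j)·x(m+i,n+j) for some finitely supported kernel w̄. -/
import Mathlib


noncomputable def interp (x : ℤ × ℤ → ℝ) (m n : ℤ) (α β : ℝ) : ℝ :=
  x (m + ⌊α⌋, n + ⌊β⌋) * (1 - Int.fract α) * (1 - Int.fract β) +
  x (m + ⌊α⌋ + 1, n + ⌊β⌋) * Int.fract α * (1 - Int.fract β) +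
  x (m + ⌊α⌋, n + ⌊β⌋ + 1) * (1 - Int.fract α) * Int.fract β +
  x (m + ⌊α⌋ + 1, n + ⌊β⌋ + 1) * Int.fract α * Int.fract β

theorem acu_operators_eq_conv_operators (T : (ℤ × ℤ → ℝ) → (ℤ × ℤ → ℝ)) :
    (∃ (K : ℕ) (w : Fin K → ℝ) (α β : Fin K → ℝ),
      ∀ (x : ℤ × ℤ → ℝ) (m n : ℤ),
        T x (m, n) = ∑ k, w k * interp x m n (α k) (β k)) ↔
    (∃ (S : Finset (ℤ × ℤ)) (wbar : ℤ × ℤ → ℝ),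
      (∀ p ∉ S, wbar p = 0) ∧
      ∀ (x : ℤ × ℤ → ℝ) (m n : ℤ),
        T x (m, n) = ∑ p ∈ S, wbar p * x (m + p.1, n + p.2)) := by
  constructor
  · rintro ⟨K, w, α, β, h⟩
    set coef : Fin K → ℤ × ℤ → ℝ := fun k p =>
      (if p.1 = ⌊α k⌋ then 1 - Int.fract (α k)
        else if p.1 = ⌊α k⌋ + 1 then Int.fract (α k) else 0) *
      (if p.2 = ⌊β k⌋ then 1 - Int.fract (β k)
        else if p.2 = ⌊β k⌋ + 1 then Int.fract (β k) else 0) with hcoef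
    set Tk : Fin K → Finset (ℤ × ℤ) := fun k =>
      {(⌊α k⌋, ⌊β k⌋), (⌊α k⌋ + 1, ⌊β k⌋), (⌊α k⌋, ⌊β k⌋ + 1), (⌊α k⌋ + 1, ⌊β k⌋ + 1)}
      with hTk
    have coef_zero : ∀ (k : Fin K) (p : ℤ × ℤ), p ∉ Tk k → coef k p = 0 := by
      intro k p hp
      simp only [hTk, Finset.mem_insert, Finset.mem_singleton, not_or] at hp
      obtain ⟨h1, h2, h3, h4⟩ := hp
      simp only [hcoef]
      rcases eq_or_ne p.1 ⌊α k⌋ with ha | ha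
      · rcases eq_or_ne p.2 ⌊β k⌋ with hb | hb
        · exact absurd (Prod.ext ha hb) h1
        · rcases eq_or_ne p.2 (⌊β k⌋ + 1) with hb' | hb'
          · exact absurd (Prod.ext ha hb') h3
          · simp [hb, hb']
      · rcases eq_or_ne p.1 (⌊α k⌋ + 1) with ha' | ha'
        · rcases eq_or_ne p.2 ⌊β k⌋ with hb | hb
          · exact absurd (Prod.ext ha' hb) h2
          · rcases eq_or_ne p.2 (⌊β k⌋ + 1) with hb' | hb'
            · exact absurd (Prod.ext ha' hb') h4
            · simp [hb, hb']
        · simp [ha, ha']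
    refine ⟨Finset.univ.biUnion Tk, fun p => ∑ k, w k * coef k p, ?_, ?_⟩
    · intro p hp
      simp only [Finset.mem_biUnion, Finset.mem_univ, true_and, not_exists] at hp
      exact Finset.sum_eq_zero fun k _ => by rw [coef_zero k p (hp k), mul_zero]
    · intro x m n
      rw [h]
      have key : ∀ k : Fin K,
          ∑ p ∈ Finset.univ.biUnion Tk, coef k p * x (m + p.1, n + p.2)
            = interp x m n (α k) (β k) := by
        intro k
        rw [← Finset.sum_subset (Finset.subset_biUnion_of_mem Tk (Finset.mem_univ k))
          (fun p _ hp => by rw [coef_zero k p hp, zero_mul])]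
        have d1 : ((⌊α k⌋, ⌊β k⌋) : ℤ × ℤ) ∉
            ({(⌊α k⌋ + 1, ⌊β k⌋), (⌊α k⌋, ⌊β k⌋ + 1), (⌊α k⌋ + 1, ⌊β k⌋ + 1)} :
              Finset (ℤ × ℤ)) := by
          simp [Prod.ext_iff]
        have d2 : ((⌊α k⌋ + 1, ⌊β k⌋) : ℤ × ℤ) ∉
            ({(⌊α k⌋, ⌊β k⌋ + 1), (⌊α k⌋ + 1, ⌊β k⌋ + 1)} : Finset (ℤ × ℤ)) := by
          simp [Prod.ext_iff]
        have d3 : ((⌊α k⌋, ⌊β k⌋ + 1) : ℤ × ℤ) ∉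
            ({(⌊α k⌋ + 1, ⌊β k⌋ + 1)} : Finset (ℤ × ℤ)) := by
          simp [Prod.ext_iff]
        rw [hTk]
        simp only
        rw [Finset.sum_insert d1, Finset.sum_insert d2, Finset.sum_insert d3,
          Finset.sum_singleton]
        simp only [hcoef]
        have e1 : (⌊α k⌋ + 1 : ℤ) ≠ ⌊α k⌋ := by omega
        have e2 : (⌊β k⌋ + 1 : ℤ) ≠ ⌊β k⌋ := by omega
        simp only [if_pos rfl, if_neg e1, if_neg e2, interp, eq_self_iff_true, if_true]
        rw [show (m : ℤ) + (⌊α k⌋ + 1) = m + ⌊α k⌋ + 1 by ring,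
          show (n : ℤ) + (⌊β k⌋ + 1) = n + ⌊β k⌋ + 1 by ring]
        ring
      calc ∑ k, w k * interp x m n (α k) (β k)
          = ∑ k, w k * ∑ p ∈ Finset.univ.biUnion Tk, coef k p * x (m + p.1, n + p.2) := by
            simp_rw [key]
        _ = ∑ p ∈ Finset.univ.biUnion Tk, (∑ k, w k * coef k p) * x (m + p.1, n + p.2) := by
            simp_rw [Finset.mul_sum, Finset.sum_mul]
            rw [Finset.sum_comm]
            simp_rw [mul_assoc]
  · rintro ⟨S, wbar, hS, h⟩
    refine ⟨S.card, fun k => wbar (S.equivFin.symm k), fun k => ((S.equivFin.symm k : ℤ × ℤ).1 : ℝ),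
      fun k => ((S.equivFin.symm k : ℤ × ℤ).2 : ℝ), fun x m n => ?_⟩
    rw [h]
    have : ∀ p ∈ S, wbar p * x (m + p.1, n + p.2)
        = wbar p * interp x m n (p.1 : ℝ) (p.2 : ℝ) := by
      intro p _
      simp [interp, Int.fract_intCast, Int.floor_intCast]
    rw [Finset.sum_congr rfl this, ← Finset.sum_attach S
      (fun p => wbar p * interp x m n (p.1 : ℝ) (p.2 : ℝ)), Finset.attach_eq_univ]
    exact (Equiv.sum_comp S.equivFin.symm
      (fun p : S => wbar p * interp x m n ((p : ℤ × ℤ).1 : ℝ) ((p : ℤ × ℤ).2 : ℝ))).symm
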